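/- Let R be a commutative ring, let f ∈ R be a non-zero-divisor which is not a unit, and let n ≥ 2 be an integer. Then the R-module R ⧸ (f) is not a retract of R ⧸ (fⁿ): there do not exist R-linear maps s : R ⧸ (f) → R ⧸ (fⁿ) and π : R ⧸ (fⁿ) → R ⧸ (f) with π ∘ s = id. In particular, the natural surjection R ⧸ (fⁿ) → R ⧸ (f) admits no R-linear section. -/

import Mathlib

private lemma smul_mk_aux {R : Type*} [CommRing R] (I : Ideal R) (f r : R) :
    f • Ideal.Quotient.mk I r = Ideal.Quotient.mk I (f * r) := by
  rw [Algebra.smul_def, Ideal.Quotient.algebraMap_eq, ← map_mul]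

/-- Let `R` be a commutative ring, `f ∈ R` a non-zero-divisor which is
not a unit, and `n ≥ 2`.  Then the `R`-module `R ⧸ (f)` is not a retract of `R ⧸ (fⁿ)`:
there are no `R`-linear maps `s : R ⧸ (f) → R ⧸ (fⁿ)` and `π : R ⧸ (fⁿ) → R ⧸ (f)` with
`π ∘ s = id`.  In particular the natural surjection `R ⧸ (fⁿ) → R ⧸ (f)` admits no
`R`-linear section. -/
theorem quotient_f_not_retract_of_quotient_f_pow
    {R : Type*} [CommRing R] (f : R)
    (hreg : f ∈ nonZeroDivisors R) (hf : ¬IsUnit f)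
    (n : ℕ) (hn : 2 ≤ n) :
    ¬∃ (s : (R ⧸ Ideal.span {f}) →ₗ[R] (R ⧸ Ideal.span {f ^ n}))
        (π : (R ⧸ Ideal.span {f ^ n}) →ₗ[R] (R ⧸ Ideal.span {f})),
      π ∘ₗ s = LinearMap.id := by
  rintro ⟨s, π, h⟩
  set x := s (Ideal.Quotient.mk (Ideal.span {f}) 1) with hx
  have hfx : f • x = 0 := by
    rw [hx, ← LinearMap.map_smul, smul_mk_aux, mul_one,
      Ideal.Quotient.eq_zero_iff_mem.mpr (Ideal.mem_span_singleton_self f), map_zero]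
  obtain ⟨a, ha⟩ := Ideal.Quotient.mk_surjective x
  have hfa : f * a ∈ Ideal.span {f ^ n} := by
    rw [← Ideal.Quotient.eq_zero_iff_mem, ← smul_mk_aux, ha]
    exact hfx
  obtain ⟨b, hb⟩ := Ideal.mem_span_singleton'.mp hfa
  have hn1 : n - 1 + 1 = n := Nat.sub_add_cancel (le_trans one_le_two hn)
  have hfn : f ^ n = f * f ^ (n - 1) := by rw [← pow_succ', hn1]
  have hcancel : a = f ^ (n - 1) * b := by
    have key : f * (f ^ (n - 1) * b) = f * a := by rw [← hb, hfn]; ring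
    exact ((mul_cancel_left_mem_nonZeroDivisors hreg).mp key).symm
  have hn2 : n - 2 + 1 = n - 1 := by omega
  have hfn2 : f ^ (n - 1) = f * f ^ (n - 2) := by rw [← pow_succ', hn2]
  have hπx : π x = 0 := by
    have hxeq : x = f • Ideal.Quotient.mk (Ideal.span {f ^ n}) (f ^ (n - 2) * b) := by
      rw [← ha, hcancel, smul_mk_aux, ← mul_assoc, ← hfn2]
    rw [hxeq, map_smul]
    obtain ⟨c, hc⟩ := Ideal.Quotient.mk_surjective
      (π (Ideal.Quotient.mk (Ideal.span {f ^ n}) (f ^ (n - 2) * b)))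
    rw [← hc, smul_mk_aux, Ideal.Quotient.eq_zero_iff_mem]
    exact Ideal.mem_span_singleton'.mpr ⟨c, mul_comm c f⟩
  have h1 : π x = Ideal.Quotient.mk (Ideal.span {f}) 1 := by
    rw [hx, ← LinearMap.comp_apply, h, LinearMap.id_apply]
  rw [hπx] at h1
  have hmem : (1 : R) ∈ Ideal.span {f} := Ideal.Quotient.eq_zero_iff_mem.mp h1.symm
  obtain ⟨c, hc⟩ := Ideal.mem_span_singleton'.mp hmem
  exact hf (IsUnit.of_mul_eq_one (a := f) c (by rw [mul_comm]; exact hc))
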